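/- Let k be a field and let P_4(k) be the subgroup of GL_4(k) consisting of matrices whose third row is (0,0,*,0) and whose first column is (*,0,0,0)^t (i.e., matrices of the shape [[*,*,*,*],[0,*,*,*],[0,0,*,0],[0,*,*,*]]). Let GSp_4(k) be the symplectic similitude group defined by the form J = [[0,1_2],[-1_2,0]], viewed as a subgroup of GL_4(k). Then GL_4(k) is the disjoint union of the two double cosets P_4(k)·GSp_4(k) and P_4(k)·t_1·GSp_4(k), where t_1 is the permutation matrix swapping the first two standard basis vectors. -/

import Mathlib

open Matrix

/-- The symplectic form `J = [[0,1₂],[-1₂,0]]`. -/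
def Jsymp (k : Type*) [Field k] : Matrix (Fin 4) (Fin 4) k :=
  !![0, 0, 1, 0; 0, 0, 0, 1; -1, 0, 0, 0; 0, -1, 0, 0]

/-- Membership in the parabolic `P₄(k)` of `GL₄(k)` consisting of invertible matrices of the
shape `[[*,*,*,*],[0,*,*,*],[0,0,*,0],[0,*,*,*]]`. -/
def memP4 {k : Type*} [Field k] (g : Matrix (Fin 4) (Fin 4) k) : Prop :=
  IsUnit g ∧ g 1 0 = 0 ∧ g 2 0 = 0 ∧ g 3 0 = 0 ∧ g 2 1 = 0 ∧ g 2 3 = 0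

/-- Membership in `GSp₄(k) = {g : ᵀg J g = μ(g) J, μ(g) ∈ k^×}`. -/
def memGSp4 {k : Type*} [Field k] (g : Matrix (Fin 4) (Fin 4) k) : Prop :=
  ∃ μ : k, μ ≠ 0 ∧ gᵀ * Jsymp k * g = μ • Jsymp k

/-- The permutation matrix `t₁` swapping the first two standard basis vectors. -/
def t1 (k : Type*) [Field k] : Matrix (Fin 4) (Fin 4) k :=
  !![0, 1, 0, 0; 1, 0, 0, 0; 0, 0, 1, 0; 0, 0, 0, 1]

section Aux

variable {k : Type*} [Field k]

lemma Jsymp_mul_Jsymp : Jsymp k * Jsymp k = -1 := by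
  ext i j
  fin_cases i <;> fin_cases j <;>
    simp [Jsymp, Matrix.mul_apply, Fin.sum_univ_four, Matrix.one_apply,
      Matrix.vecHead, Matrix.vecTail]

lemma Jsymp_transp : (Jsymp k)ᵀ = -Jsymp k := by
  ext i j
  fin_cases i <;> fin_cases j <;> simp [Jsymp, Matrix.vecHead, Matrix.vecTail]

lemma Jsymp_det : (Jsymp k).det = 1 := by
  simp [Jsymp, Matrix.det_succ_row_zero, Fin.sum_univ_succ, Matrix.vecHead, Matrix.vecTail,
    Fin.succAbove]

lemma swapJ {h : Matrix (Fin 4) (Fin 4) k} {μ : k} (hμ : μ ≠ 0)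
    (e : hᵀ * Jsymp k * h = μ • Jsymp k) : h * Jsymp k * hᵀ = μ • Jsymp k := by
  have hdet : IsUnit h.det := by
    have := congrArg Matrix.det e
    rw [Matrix.det_mul, Matrix.det_mul, Matrix.det_transpose, Matrix.det_smul, Jsymp_det] at this
    simp only [mul_one] at this
    rw [isUnit_iff_ne_zero]
    intro h0
    rw [h0, mul_zero] at this
    exact (pow_ne_zero _ hμ) this.symm
  have hr := Matrix.mul_nonsing_inv h hdet
  have e1 : hᵀ * Jsymp k = μ • (Jsymp k * h⁻¹) := by
    have := congrArg (fun M => M * h⁻¹) e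
    simp only [Matrix.smul_mul, Matrix.mul_assoc] at this
    rw [hr, Matrix.mul_one] at this
    exact this
  have e2 : hᵀ = (-μ) • (Jsymp k * h⁻¹ * Jsymp k) := by
    have e1' := congrArg (fun M => M * Jsymp k) e1
    rw [Matrix.mul_assoc, Jsymp_mul_Jsymp, Matrix.mul_neg, Matrix.mul_one] at e1'
    have : hᵀ = -(μ • (Jsymp k * h⁻¹ * Jsymp k)) := by
      rw [← neg_neg hᵀ, e1']
      simp [Matrix.smul_mul]
    rw [this, neg_smul]
  rw [e2]
  rw [Matrix.mul_smul, show h * Jsymp k * (Jsymp k * h⁻¹ * Jsymp k)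
      = h * (Jsymp k * Jsymp k) * h⁻¹ * Jsymp k by simp only [Matrix.mul_assoc],
    Jsymp_mul_Jsymp]
  simp only [Matrix.mul_neg, Matrix.mul_one, Matrix.neg_mul, smul_neg, neg_smul, neg_neg]
  rw [hr, Matrix.one_mul]

/-- From the column form of the similitude relation to the row form and back. -/
lemma memGSp4_of_row {h : Matrix (Fin 4) (Fin 4) k} {μ : k} (hμ : μ ≠ 0)
    (e : h * Jsymp k * hᵀ = μ • Jsymp k) : memGSp4 h := by
  refine ⟨μ, hμ, ?_⟩
  have := swapJ (h := hᵀ) hμ (by rwa [Matrix.transpose_transpose])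
  rwa [Matrix.transpose_transpose] at this

lemma row_of_memGSp4 {h : Matrix (Fin 4) (Fin 4) k} (hh : memGSp4 h) :
    ∃ μ : k, μ ≠ 0 ∧ h * Jsymp k * hᵀ = μ • Jsymp k := by
  obtain ⟨μ, hμ, e⟩ := hh
  exact ⟨μ, hμ, swapJ hμ e⟩

lemma mulVec_zero_eq_zero {N : Matrix (Fin 4) (Fin 4) k} (hN : IsUnit N)
    {w : Fin 4 → k} (h : N.mulVec w = 0) : w = 0 := by
  have hd : IsUnit N.det := (Matrix.isUnit_iff_isUnit_det N).mp hN
  have hl := Matrix.nonsing_inv_mul N hd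
  calc w = ((N⁻¹ * N).mulVec w) := by rw [hl, Matrix.one_mulVec]
    _ = N⁻¹.mulVec (N.mulVec w) := by rw [← Matrix.mulVec_mulVec]
    _ = 0 := by rw [h, Matrix.mulVec_zero]

lemma isUnit_N {g : Matrix (Fin 4) (Fin 4) k} (hg : IsUnit g) :
    IsUnit (g * Jsymp k * gᵀ) := by
  rw [Matrix.isUnit_iff_isUnit_det]
  rw [Matrix.det_mul, Matrix.det_mul, Jsymp_det, Matrix.det_transpose, mul_one]
  have hd : IsUnit g.det := (Matrix.isUnit_iff_isUnit_det g).mp hg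
  exact hd.mul hd

lemma N_transpose (g : Matrix (Fin 4) (Fin 4) k) :
    (g * Jsymp k * gᵀ)ᵀ = -(g * Jsymp k * gᵀ) := by
  rw [Matrix.transpose_mul, Matrix.transpose_mul, Matrix.transpose_transpose, Jsymp_transp]
  simp [Matrix.mul_assoc, Matrix.neg_mul, Matrix.mul_neg]

lemma N_skew (g : Matrix (Fin 4) (Fin 4) k) (i j : Fin 4) :
    (g * Jsymp k * gᵀ) j i = -(g * Jsymp k * gᵀ) i j := by
  have := congrFun (congrFun (N_transpose g) i) j
  simpa using this

lemma N_diag (g : Matrix (Fin 4) (Fin 4) k) (i : Fin 4) :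
    (g * Jsymp k * gᵀ) i i = 0 := by
  simp [Jsymp, Matrix.mul_apply, Fin.sum_univ_four, Matrix.transpose_apply,
    Matrix.vecHead, Matrix.vecTail]
  ring

lemma memP4_mul {a b : Matrix (Fin 4) (Fin 4) k} (ha : memP4 a) (hb : memP4 b) :
    memP4 (a * b) := by
  obtain ⟨hau, a10, a20, a30, a21, a23⟩ := ha
  obtain ⟨hbu, b10, b20, b30, b21, b23⟩ := hb
  refine ⟨hau.mul hbu, ?_, ?_, ?_, ?_, ?_⟩ <;>
    simp [Matrix.mul_apply, Fin.sum_univ_four, a10, a20, a30, a21, a23,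
      b10, b20, b30, b21, b23]

end Aux
section Core

variable {k : Type*} [Field k]

set_option maxHeartbeats 2000000 in
lemma caseA_core (d1 d2 d3 b : k) (hd2 : d2 ≠ 0) (hb : b ≠ 0) :
    !![1,0,0,0; 0,1,-d1/d2,0; 0,0,1,0; 0,0,-d3/b,d2/b] *
      !![0,d1,d2,d3; -d1,0,0,b; -d2,0,0,0; -d3,-b,0,0] *
      !![1,0,0,0; 0,1,-d1/d2,0; 0,0,1,0; 0,0,-d3/b,d2/b]ᵀ = d2 • Jsymp k := by
  ext i j
  fin_cases i <;> fin_cases j <;>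
    simp [Jsymp, Matrix.mul_apply, Fin.sum_univ_four, Matrix.vecHead, Matrix.vecTail] <;>
    field_simp <;> ring

set_option maxHeartbeats 4000000 in
lemma caseB_core (d1 d2 d3 c1 b c3 : k) (hc1 : c1 ≠ 0)
    (hD : c1*d3 - c3*d1 - b*d2 ≠ 0) :
    !![0,1,0,0;
       c1^2/(c1*d3 - c3*d1 - b*d2), -(c1*d2)/(c1*d3 - c3*d1 - b*d2), c1*d1/(c1*d3 - c3*d1 - b*d2), 0;
       0,0,1,0;
       0, -c3/c1, -b/c1, 1] *
      !![0,d1,d2,d3; -d1,0,c1,b; -d2,-c1,0,-c3; -d3,-b,c3,0] *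
      !![0,1,0,0;
       c1^2/(c1*d3 - c3*d1 - b*d2), -(c1*d2)/(c1*d3 - c3*d1 - b*d2), c1*d1/(c1*d3 - c3*d1 - b*d2), 0;
       0,0,1,0;
       0, -c3/c1, -b/c1, 1]ᵀ = c1 • Jsymp k := by
  ext i j
  fin_cases i <;> fin_cases j <;>
    simp [Jsymp, Matrix.mul_apply, Fin.sum_univ_four, Matrix.vecHead, Matrix.vecTail] <;>
    field_simp <;> ring

lemma t1_J_t1 : t1 k * Jsymp k * (t1 k)ᵀ = !![0,0,0,1; 0,0,1,0; 0,-1,0,0; -1,0,0,0] := by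
  ext i j
  fin_cases i <;> fin_cases j <;>
    simp [Jsymp, t1, Matrix.mul_apply, Fin.sum_univ_four, Matrix.vecHead, Matrix.vecTail]

lemma claim1 {g p h : Matrix (Fin 4) (Fin 4) k} (hp : memP4 p) (hh : memGSp4 h)
    (e : g = p * h) :
    (g * Jsymp k * gᵀ) 1 2 = 0 ∧ (g * Jsymp k * gᵀ) 3 2 = 0 := by
  obtain ⟨hu, p10, p20, p30, p21, p23⟩ := hp
  obtain ⟨μ, hμ, hrow⟩ := row_of_memGSp4 hh
  have hN : g * Jsymp k * gᵀ = p * (μ • Jsymp k) * pᵀ := by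
    rw [e, Matrix.transpose_mul, show p * h * Jsymp k * (hᵀ * pᵀ)
      = p * (h * Jsymp k * hᵀ) * pᵀ by simp only [Matrix.mul_assoc], hrow]
  rw [hN]
  constructor <;>
    simp [Jsymp, Matrix.mul_apply, Fin.sum_univ_four, Matrix.transpose_apply,
      Matrix.smul_apply, p10, p20, p30, p21, p23, Matrix.vecHead, Matrix.vecTail]

lemma claim2 {g p h : Matrix (Fin 4) (Fin 4) k} (hp : memP4 p) (hh : memGSp4 h)
    (e : g = p * t1 k * h) :
    ¬ ((g * Jsymp k * gᵀ) 1 2 = 0 ∧ (g * Jsymp k * gᵀ) 3 2 = 0) := by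
  obtain ⟨hu, p10, p20, p30, p21, p23⟩ := hp
  obtain ⟨μ, hμ, hrow⟩ := row_of_memGSp4 hh
  have hN : g * Jsymp k * gᵀ = μ • (p * (t1 k * Jsymp k * (t1 k)ᵀ) * pᵀ) := by
    rw [e]
    rw [show p * t1 k * h * Jsymp k * (p * t1 k * h)ᵀ
        = p * (t1 k * (h * Jsymp k * hᵀ) * (t1 k)ᵀ) * pᵀ by
      simp only [Matrix.transpose_mul, Matrix.mul_assoc], hrow]
    simp only [Matrix.mul_smul, Matrix.smul_mul]
  rw [t1_J_t1] at hN
  have e12 : (g * Jsymp k * gᵀ) 1 2 = μ * (p 1 1 * p 2 2) := by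
    rw [hN]
    simp [Matrix.mul_apply, Fin.sum_univ_four, Matrix.smul_apply, Matrix.transpose_apply,
      p10, p20, p30, p21, p23, Matrix.vecHead, Matrix.vecTail]
  have e32 : (g * Jsymp k * gᵀ) 3 2 = μ * (p 3 1 * p 2 2) := by
    rw [hN]
    simp [Matrix.mul_apply, Fin.sum_univ_four, Matrix.smul_apply, Matrix.transpose_apply,
      p10, p20, p30, p21, p23, Matrix.vecHead, Matrix.vecTail]
  rintro ⟨h12, h32⟩
  rw [e12] at h12
  rw [e32] at h32
  have hdet : IsUnit p.det := (Matrix.isUnit_iff_isUnit_det p).mp hu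
  have hpr := Matrix.mul_nonsing_inv p hdet
  have hpl := Matrix.nonsing_inv_mul p hdet
  have h22 : p 2 2 * p⁻¹ 2 2 = 1 := by
    have := congrFun (congrFun hpr 2) 2
    simp [Matrix.mul_apply, Fin.sum_univ_four, p20, p21, p23, Matrix.one_apply] at this
    linear_combination this
  have hp22 : p 2 2 ≠ 0 := left_ne_zero_of_mul_eq_one h22
  have hp11 : p 1 1 = 0 := by
    rcases mul_eq_zero.mp h12 with h | h
    · exact absurd h hμ
    · rcases mul_eq_zero.mp h with h' | h'
      · exact h'
      · exact absurd h' hp22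
  have hp31 : p 3 1 = 0 := by
    rcases mul_eq_zero.mp h32 with h | h
    · exact absurd h hμ
    · rcases mul_eq_zero.mp h with h' | h'
      · exact h'
      · exact absurd h' hp22
  have h00 : p⁻¹ 0 0 * p 0 0 = 1 := by
    have := congrFun (congrFun hpl 0) 0
    simp [Matrix.mul_apply, Fin.sum_univ_four, p10, p20, p30, Matrix.one_apply] at this
    linear_combination this
  have hp00 : p 0 0 ≠ 0 := right_ne_zero_of_mul_eq_one h00
  have h10 : p⁻¹ 1 0 = 0 := by
    have := congrFun (congrFun hpl 1) 0
    simp [Matrix.mul_apply, Fin.sum_univ_four, p10, p20, p30, Matrix.one_apply, hp00] at this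
    exact this
  have h11 : p⁻¹ 1 0 * p 0 1 = 1 := by
    have := congrFun (congrFun hpl 1) 1
    simp [Matrix.mul_apply, Fin.sum_univ_four, hp11, p21, hp31, Matrix.one_apply] at this
    linear_combination this
  rw [h10, zero_mul] at h11
  exact zero_ne_one h11

end Core
section Exist

variable {k : Type*} [Field k]

set_option maxHeartbeats 2000000 in
lemma existsA {g : Matrix (Fin 4) (Fin 4) k} (hg : IsUnit g)
    (h12 : (g * Jsymp k * gᵀ) 1 2 = 0) (h32 : (g * Jsymp k * gᵀ) 3 2 = 0) :
    ∃ p h : Matrix (Fin 4) (Fin 4) k, memP4 p ∧ memGSp4 h ∧ g = p * h := by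
  have hNu : IsUnit (g * Jsymp k * gᵀ) := isUnit_N hg
  have hs := N_skew g
  have hd := N_diag g
  obtain ⟨d1, d2, d3, b, hd1, hd2e, hd3, hbe⟩ :
      ∃ d1 d2 d3 b : k, (g * Jsymp k * gᵀ) 0 1 = d1 ∧ (g * Jsymp k * gᵀ) 0 2 = d2 ∧
        (g * Jsymp k * gᵀ) 0 3 = d3 ∧ (g * Jsymp k * gᵀ) 1 3 = b :=
    ⟨_, _, _, _, rfl, rfl, rfl, rfl⟩
  have hd2 : d2 ≠ 0 := by
    intro h0
    have hv : (g * Jsymp k * gᵀ).mulVec ![0,0,1,0] = 0 := by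
      funext i
      fin_cases i <;>
        simp [Matrix.mulVec, dotProduct, Fin.sum_univ_four, h12, h32, hd, hd2e, h0,
          Matrix.vecHead, Matrix.vecTail]
    have := congrFun (mulVec_zero_eq_zero hNu hv) 2
    simp at this
  have hb : b ≠ 0 := by
    intro h0
    have hv : (g * Jsymp k * gᵀ).mulVec ![0, d2, -d1, 0] = 0 := by
      funext i
      fin_cases i <;>
        simp [Matrix.mulVec, dotProduct, Fin.sum_univ_four, h12, h32, hd, hd1, hd2e, hbe, h0,
          hs 0 1, hs 0 2, hs 1 2, hs 1 3, Matrix.vecHead, Matrix.vecTail] <;>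
        ring
    have := congrFun (mulVec_zero_eq_zero hNu hv) 1
    simp at this
    exact hd2 this
  have hNmat : g * Jsymp k * gᵀ = !![0,d1,d2,d3; -d1,0,0,b; -d2,0,0,0; -d3,-b,0,0] := by
    ext i j
    fin_cases i <;> fin_cases j <;>
      simp [hd, h12, h32, hd1, hd2e, hd3, hbe, hs 0 1, hs 0 2, hs 0 3, hs 1 2, hs 1 3, hs 3 2,
        Matrix.vecHead, Matrix.vecTail]
  refine ⟨!![1,0,0,0; 0,1,d1/d2,0; 0,0,1,0; 0,0,d3/d2, b/d2],
          !![1,0,0,0; 0,1,-d1/d2,0; 0,0,1,0; 0,0,-d3/b, d2/b] * g, ?_, ?_, ?_⟩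
  case _ =>
    have hpq : !![1,0,0,0; 0,1,d1/d2,0; 0,0,1,0; 0,0,d3/d2, b/d2] *
        !![1,0,0,0; 0,1,-d1/d2,0; 0,0,1,0; 0,0,-d3/b, d2/b] = 1 := by
      ext i j
      fin_cases i <;> fin_cases j <;>
        simp [Matrix.mul_apply, Fin.sum_univ_four, Matrix.one_apply,
          Matrix.vecHead, Matrix.vecTail] <;>
        field_simp <;> ring
    refine ⟨?_, by simp [Matrix.vecHead, Matrix.vecTail], by simp [Matrix.vecHead, Matrix.vecTail],
      by simp [Matrix.vecHead, Matrix.vecTail], by simp [Matrix.vecHead, Matrix.vecTail],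
      by simp [Matrix.vecHead, Matrix.vecTail]⟩
    rw [Matrix.isUnit_iff_isUnit_det]
    exact IsUnit.of_mul_eq_one _ (by rw [← Matrix.det_mul, hpq, Matrix.det_one])
  case _ =>
    refine memGSp4_of_row hd2 ?_
    rw [show !![1,0,0,0; 0,1,-d1/d2,0; 0,0,1,0; 0,0,-d3/b, d2/b] * g * Jsymp k *
        (!![1,0,0,0; 0,1,-d1/d2,0; 0,0,1,0; 0,0,-d3/b, d2/b] * g)ᵀ
        = !![1,0,0,0; 0,1,-d1/d2,0; 0,0,1,0; 0,0,-d3/b, d2/b] * (g * Jsymp k * gᵀ) *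
          !![1,0,0,0; 0,1,-d1/d2,0; 0,0,1,0; 0,0,-d3/b, d2/b]ᵀ by
      simp only [Matrix.transpose_mul, Matrix.mul_assoc], hNmat]
    exact caseA_core d1 d2 d3 b hd2 hb
  case _ =>
    rw [← Matrix.mul_assoc]
    rw [show !![1,0,0,0; 0,1,d1/d2,0; 0,0,1,0; 0,0,d3/d2, b/d2] *
        !![1,0,0,0; 0,1,-d1/d2,0; 0,0,1,0; 0,0,-d3/b, d2/b] = 1 by
      ext i j
      fin_cases i <;> fin_cases j <;>
        simp [Matrix.mul_apply, Fin.sum_univ_four, Matrix.one_apply,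
          Matrix.vecHead, Matrix.vecTail] <;>
        field_simp <;> ring]
    rw [Matrix.one_mul]
end Exist
section ExistB

variable {k : Type*} [Field k]

set_option maxHeartbeats 4000000 in
lemma existsB1 {g : Matrix (Fin 4) (Fin 4) k} (hg : IsUnit g)
    (hc1 : (g * Jsymp k * gᵀ) 1 2 ≠ 0) :
    ∃ p h : Matrix (Fin 4) (Fin 4) k, memP4 p ∧ memGSp4 h ∧ g = p * t1 k * h := by
  have hNu : IsUnit (g * Jsymp k * gᵀ) := isUnit_N hg
  have hs := N_skew g
  have hd := N_diag g
  obtain ⟨d1, d2, d3, c1, b, c3, hd1, hd2e, hd3, hc1e, hbe, hc3e⟩ :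
      ∃ d1 d2 d3 c1 b c3 : k, (g * Jsymp k * gᵀ) 0 1 = d1 ∧ (g * Jsymp k * gᵀ) 0 2 = d2 ∧
        (g * Jsymp k * gᵀ) 0 3 = d3 ∧ (g * Jsymp k * gᵀ) 1 2 = c1 ∧
        (g * Jsymp k * gᵀ) 1 3 = b ∧ (g * Jsymp k * gᵀ) 3 2 = c3 :=
    ⟨_, _, _, _, _, _, rfl, rfl, rfl, rfl, rfl, rfl⟩
  rw [hc1e] at hc1
  have hD : c1*d3 - c3*d1 - b*d2 ≠ 0 := by
    intro h0
    have hv : (g * Jsymp k * gᵀ).mulVec ![0, -c3, -b, c1] = 0 := by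
      funext i
      fin_cases i
      · simp [Matrix.mulVec, dotProduct, Fin.sum_univ_four, hd1, hd2e, hd3,
          Matrix.vecHead, Matrix.vecTail]
        linear_combination h0
      · simp [Matrix.mulVec, dotProduct, Fin.sum_univ_four, hd, hc1e, hbe,
          Matrix.vecHead, Matrix.vecTail]
        ring
      · simp [Matrix.mulVec, dotProduct, Fin.sum_univ_four, hd, hs 1 2, hs 3 2, hc1e, hc3e,
          Matrix.vecHead, Matrix.vecTail]
        ring
      · simp [Matrix.mulVec, dotProduct, Fin.sum_univ_four, hd, hs 1 3, hbe, hc3e,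
          Matrix.vecHead, Matrix.vecTail]
        ring
    have := congrFun (mulVec_zero_eq_zero hNu hv) 3
    simp at this
    exact hc1 this
  have hNmat : g * Jsymp k * gᵀ
      = !![0,d1,d2,d3; -d1,0,c1,b; -d2,-c1,0,-c3; -d3,-b,c3,0] := by
    ext i j
    fin_cases i <;> fin_cases j <;>
      simp [hd, hd1, hd2e, hd3, hc1e, hbe, hc3e, hs 0 1, hs 0 2, hs 0 3, hs 1 2, hs 1 3, hs 3 2,
        Matrix.vecHead, Matrix.vecTail]
  have hPQ : !![(c1*d3 - c3*d1 - b*d2)/c1^2, d2/c1, -(d1/c1), 0; 0,1,0,0; 0,0,1,0;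
        0, c3/c1, b/c1, 1] * (t1 k *
      !![0,1,0,0;
         c1^2/(c1*d3 - c3*d1 - b*d2), -(c1*d2)/(c1*d3 - c3*d1 - b*d2),
           c1*d1/(c1*d3 - c3*d1 - b*d2), 0;
         0,0,1,0;
         0, -c3/c1, -b/c1, 1]) = 1 := by
    ext i j
    fin_cases i <;> fin_cases j <;>
      simp [t1, Matrix.mul_apply, Fin.sum_univ_four, Matrix.one_apply,
        Matrix.vecHead, Matrix.vecTail] <;>
      field_simp <;> ring
  refine ⟨!![(c1*d3 - c3*d1 - b*d2)/c1^2, d2/c1, -(d1/c1), 0; 0,1,0,0; 0,0,1,0;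
        0, c3/c1, b/c1, 1],
      !![0,1,0,0;
         c1^2/(c1*d3 - c3*d1 - b*d2), -(c1*d2)/(c1*d3 - c3*d1 - b*d2),
           c1*d1/(c1*d3 - c3*d1 - b*d2), 0;
         0,0,1,0;
         0, -c3/c1, -b/c1, 1] * g, ?_, ?_, ?_⟩
  case _ =>
    refine ⟨?_, by simp [Matrix.vecHead, Matrix.vecTail], by simp [Matrix.vecHead, Matrix.vecTail],
      by simp [Matrix.vecHead, Matrix.vecTail], by simp [Matrix.vecHead, Matrix.vecTail],
      by simp [Matrix.vecHead, Matrix.vecTail]⟩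
    rw [Matrix.isUnit_iff_isUnit_det]
    exact IsUnit.of_mul_eq_one _ (by rw [← Matrix.det_mul, hPQ, Matrix.det_one])
  case _ =>
    refine memGSp4_of_row hc1 ?_
    rw [show !![0,1,0,0;
         c1^2/(c1*d3 - c3*d1 - b*d2), -(c1*d2)/(c1*d3 - c3*d1 - b*d2),
           c1*d1/(c1*d3 - c3*d1 - b*d2), 0;
         0,0,1,0;
         0, -c3/c1, -b/c1, 1] * g * Jsymp k *
        (!![0,1,0,0;
         c1^2/(c1*d3 - c3*d1 - b*d2), -(c1*d2)/(c1*d3 - c3*d1 - b*d2),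
           c1*d1/(c1*d3 - c3*d1 - b*d2), 0;
         0,0,1,0;
         0, -c3/c1, -b/c1, 1] * g)ᵀ
        = !![0,1,0,0;
         c1^2/(c1*d3 - c3*d1 - b*d2), -(c1*d2)/(c1*d3 - c3*d1 - b*d2),
           c1*d1/(c1*d3 - c3*d1 - b*d2), 0;
         0,0,1,0;
         0, -c3/c1, -b/c1, 1] * (g * Jsymp k * gᵀ) *
          !![0,1,0,0;
         c1^2/(c1*d3 - c3*d1 - b*d2), -(c1*d2)/(c1*d3 - c3*d1 - b*d2),
           c1*d1/(c1*d3 - c3*d1 - b*d2), 0;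
         0,0,1,0;
         0, -c3/c1, -b/c1, 1]ᵀ by
      simp only [Matrix.transpose_mul, Matrix.mul_assoc], hNmat]
    exact caseB_core d1 d2 d3 c1 b c3 hc1 hD
  case _ =>
    rw [show !![(c1*d3 - c3*d1 - b*d2)/c1^2, d2/c1, -(d1/c1), 0; 0,1,0,0; 0,0,1,0;
        0, c3/c1, b/c1, 1] * t1 k *
        (!![0,1,0,0;
         c1^2/(c1*d3 - c3*d1 - b*d2), -(c1*d2)/(c1*d3 - c3*d1 - b*d2),
           c1*d1/(c1*d3 - c3*d1 - b*d2), 0;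
         0,0,1,0;
         0, -c3/c1, -b/c1, 1] * g)
        = !![(c1*d3 - c3*d1 - b*d2)/c1^2, d2/c1, -(d1/c1), 0; 0,1,0,0; 0,0,1,0;
        0, c3/c1, b/c1, 1] * (t1 k *
      !![0,1,0,0;
         c1^2/(c1*d3 - c3*d1 - b*d2), -(c1*d2)/(c1*d3 - c3*d1 - b*d2),
           c1*d1/(c1*d3 - c3*d1 - b*d2), 0;
         0,0,1,0;
         0, -c3/c1, -b/c1, 1]) * g by simp only [Matrix.mul_assoc], hPQ, Matrix.one_mul]

end ExistB
section Main

variable {k : Type*} [Field k]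

/-- auxiliary permutation matrix swapping rows 1 and 3. -/
def rMat (k : Type*) [Field k] : Matrix (Fin 4) (Fin 4) k :=
  !![1,0,0,0;0,0,0,1;0,0,1,0;0,1,0,0]

lemma existsB {g : Matrix (Fin 4) (Fin 4) k} (hg : IsUnit g)
    (hC : ¬ ((g * Jsymp k * gᵀ) 1 2 = 0 ∧ (g * Jsymp k * gᵀ) 3 2 = 0)) :
    ∃ p h : Matrix (Fin 4) (Fin 4) k, memP4 p ∧ memGSp4 h ∧ g = p * t1 k * h := by
  by_cases h12 : (g * Jsymp k * gᵀ) 1 2 = 0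
  · have h32 : (g * Jsymp k * gᵀ) 3 2 ≠ 0 := fun h => hC ⟨h12, h⟩
    have hrr : rMat k *
        rMat k = 1 := by
      ext i j
      fin_cases i <;> fin_cases j <;>
        simp [rMat, Matrix.mul_apply, Fin.sum_univ_four, Matrix.one_apply,
          Matrix.vecHead, Matrix.vecTail]
    have hru : IsUnit (rMat k) := by
      rw [Matrix.isUnit_iff_isUnit_det]
      exact IsUnit.of_mul_eq_one _ (by rw [← Matrix.det_mul, hrr, Matrix.det_one])
    have hrg : IsUnit (rMat k * g) := hru.mul hg
    have hN' : ((rMat k * g) * Jsymp k *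
        (rMat k * g)ᵀ) 1 2 = (g * Jsymp k * gᵀ) 3 2 := by
      rw [show (rMat k * g) * Jsymp k *
          (rMat k * g)ᵀ
          = rMat k * (g * Jsymp k * gᵀ) *
            (rMat k)ᵀ by
        simp only [Matrix.transpose_mul, Matrix.mul_assoc]]
      have key : ∀ M : Matrix (Fin 4) (Fin 4) k, (rMat k * M * (rMat k)ᵀ) 1 2 = M 3 2 := by
        intro M
        simp [rMat, Matrix.mul_apply, Matrix.vecMul, dotProduct, Fin.sum_univ_four,
          Matrix.transpose_apply, Matrix.vecHead, Matrix.vecTail]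
      exact key _
    obtain ⟨p, h, hp, hh, e⟩ := existsB1 hrg (by rw [hN']; exact h32)
    have hrP : memP4 (rMat k) := by
      refine ⟨hru, ?_, ?_, ?_, ?_, ?_⟩ <;> simp [rMat, Matrix.vecHead, Matrix.vecTail]
    refine ⟨rMat k * p, h, memP4_mul hrP hp, hh, ?_⟩
    calc g = rMat k *
          (rMat k * g) := by
          rw [← Matrix.mul_assoc, hrr, Matrix.one_mul]
      _ = rMat k * (p * t1 k * h) := by rw [e]
      _ = rMat k * p * t1 k * h := by
          simp only [Matrix.mul_assoc]
  · exact existsB1 hg h12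

end Main

/-- `GL₄(k)` is the disjoint union of the double cosets `P₄(k)·GSp₄(k)` and
`P₄(k)·t₁·GSp₄(k)`: every invertible `g` lies in exactly one of the two. -/
theorem GL4_eq_two_double_cosets {k : Type*} [Field k]
    (g : Matrix (Fin 4) (Fin 4) k) (hg : IsUnit g) :
    Xor' (∃ p h : Matrix (Fin 4) (Fin 4) k, memP4 p ∧ memGSp4 h ∧ g = p * h)
      (∃ p h : Matrix (Fin 4) (Fin 4) k, memP4 p ∧ memGSp4 h ∧ g = p * t1 k * h) := by
  unfold Xor'
  by_cases hC : (g * Jsymp k * gᵀ) 1 2 = 0 ∧ (g * Jsymp k * gᵀ) 3 2 = 0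
  · refine Or.inl ⟨existsA hg hC.1 hC.2, ?_⟩
    rintro ⟨p, h, hp, hh, e⟩
    exact claim2 hp hh e hC
  · refine Or.inr ⟨existsB hg hC, ?_⟩
    rintro ⟨p, h, hp, hh, e⟩
    exact hC (claim1 hp hh e)
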